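/- Fix reals λ1 > 0, γ > 0 and suppose λ2 > 1. All eigenvalues of the Jacobian matrix of the reduced mean-field vector field G at the point (0, 1 − 1/λ2, 0) (the reduced coordinates of the equilibrium v̄) are negative real numbers if and only if λ2 > λ1; and if λ1 > λ2, then this Jacobian matrix has a positive real eigenvalue. -/

import Mathlib

open Polynomial

/-- The reduced mean-field vector field, obtained by substituting
`u0 = 1 - u1 - u2 - u3` into `(F1, F2, F3)`; here `u 0, u 1, u 2`
stand for the coordinates `u1, u2, u3`. -/
def reducedMeanField (l1 l2 g : ℝ) (u : Fin 3 → ℝ) : Fin 3 → ℝ :=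
  ![l1 * (1 - u 0 - u 1 - u 2) * u 0 + l1 * u 0 * u 2 - u 0,
    l2 * (1 - u 0 - u 1 - u 2) * u 1 - u 1,
    u 0 - l1 * u 0 * u 2 - g * u 2]

/-- The Jacobian matrix of a map `ℝ³ → ℝ³` at a point. -/
noncomputable def jacobian (f : (Fin 3 → ℝ) → Fin 3 → ℝ) (p : Fin 3 → ℝ) :
    Matrix (Fin 3) (Fin 3) ℝ :=
  fun i j => fderiv ℝ f p (Pi.single j 1) i

lemma jac_eq (l1 l2 g : ℝ) (hl2 : l2 ≠ 0) :
    jacobian (reducedMeanField l1 l2 g) ![0, 1 - 1 / l2, 0] =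
      !![l1 / l2 - 1, 0, 0; -(l2 - 1), -(l2 - 1), -(l2 - 1); 1, 0, -g] := by
  set p : Fin 3 → ℝ := ![0, 1 - 1 / l2, 0] with hp
  have h0 : HasFDerivAt (fun u : Fin 3 → ℝ => u 0)
      (ContinuousLinearMap.proj 0 : (Fin 3 → ℝ) →L[ℝ] ℝ) p :=
    (ContinuousLinearMap.proj 0 : (Fin 3 → ℝ) →L[ℝ] ℝ).hasFDerivAt
  have h1 : HasFDerivAt (fun u : Fin 3 → ℝ => u 1)
      (ContinuousLinearMap.proj 1 : (Fin 3 → ℝ) →L[ℝ] ℝ) p :=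
    (ContinuousLinearMap.proj 1 : (Fin 3 → ℝ) →L[ℝ] ℝ).hasFDerivAt
  have h2 : HasFDerivAt (fun u : Fin 3 → ℝ => u 2)
      (ContinuousLinearMap.proj 2 : (Fin 3 → ℝ) →L[ℝ] ℝ) p :=
    (ContinuousLinearMap.proj 2 : (Fin 3 → ℝ) →L[ℝ] ℝ).hasFDerivAt
  have hs := (((hasFDerivAt_const (1:ℝ) p).sub h0).sub h1).sub h2
  have H0 := (((hs.const_mul l1).mul h0).add ((h0.const_mul l1).mul h2)).sub h0
  have H1 := ((hs.const_mul l2).mul h1).sub h1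
  have H2 := (h0.sub ((h0.const_mul l1).mul h2)).sub (h2.const_mul g)
  have e0 : (fun u : Fin 3 → ℝ => reducedMeanField l1 l2 g u 0)
      = fun u : Fin 3 → ℝ => l1 * (1 - u 0 - u 1 - u 2) * u 0 + l1 * u 0 * u 2 - u 0 := by
    funext u; simp [reducedMeanField]
  have e1 : (fun u : Fin 3 → ℝ => reducedMeanField l1 l2 g u 1)
      = fun u : Fin 3 → ℝ => l2 * (1 - u 0 - u 1 - u 2) * u 1 - u 1 := by
    funext u; simp [reducedMeanField]
  have e2 : (fun u : Fin 3 → ℝ => reducedMeanField l1 l2 g u 2)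
      = fun u : Fin 3 → ℝ => u 0 - l1 * u 0 * u 2 - g * u 2 := by
    funext u; simp [reducedMeanField]
  have hdiff : ∀ k : Fin 3, DifferentiableAt ℝ
      (fun u : Fin 3 → ℝ => reducedMeanField l1 l2 g u k) p := by
    intro k
    fin_cases k
    · show DifferentiableAt ℝ (fun u : Fin 3 → ℝ => reducedMeanField l1 l2 g u 0) p
      rw [e0]; exact H0.differentiableAt
    · show DifferentiableAt ℝ (fun u : Fin 3 → ℝ => reducedMeanField l1 l2 g u 1) p
      rw [e1]; exact H1.differentiableAt
    · show DifferentiableAt ℝ (fun u : Fin 3 → ℝ => reducedMeanField l1 l2 g u 2) p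
      rw [e2]; exact H2.differentiableAt
  ext i j
  show fderiv ℝ (reducedMeanField l1 l2 g) p (Pi.single j 1) i = _
  rw [fderiv_pi hdiff]
  rw [ContinuousLinearMap.pi_apply]
  fin_cases i
  · show fderiv ℝ (fun u : Fin 3 → ℝ => reducedMeanField l1 l2 g u 0) p (Pi.single j 1)
        = !![l1 / l2 - 1, 0, 0; -(l2 - 1), -(l2 - 1), -(l2 - 1); 1, 0, -g] 0 j
    rw [e0, HasFDerivAt.fderiv (f := fun u : Fin 3 → ℝ => l1 * (1 - u 0 - u 1 - u 2) * u 0 + l1 * u 0 * u 2 - u 0) H0]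
    fin_cases j <;> simp [hp, Pi.single_apply] <;> field_simp <;> ring
  · show fderiv ℝ (fun u : Fin 3 → ℝ => reducedMeanField l1 l2 g u 1) p (Pi.single j 1)
        = !![l1 / l2 - 1, 0, 0; -(l2 - 1), -(l2 - 1), -(l2 - 1); 1, 0, -g] 1 j
    rw [e1, HasFDerivAt.fderiv (f := fun u : Fin 3 → ℝ => l2 * (1 - u 0 - u 1 - u 2) * u 1 - u 1) H1]
    fin_cases j <;> simp [hp, Pi.single_apply] <;> field_simp <;> ring
  · show fderiv ℝ (fun u : Fin 3 → ℝ => reducedMeanField l1 l2 g u 2) p (Pi.single j 1)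
        = !![l1 / l2 - 1, 0, 0; -(l2 - 1), -(l2 - 1), -(l2 - 1); 1, 0, -g] 2 j
    rw [e2, HasFDerivAt.fderiv (f := fun u : Fin 3 → ℝ => u 0 - l1 * u 0 * u 2 - g * u 2) H2]
    fin_cases j <;> simp [hp, Pi.single_apply] <;> field_simp <;> ring

lemma cp3 (a b d : ℝ) :
    (!![a, 0, 0; b, b, b; 1, 0, d] : Matrix (Fin 3) (Fin 3) ℝ).charpoly
      = (X - C a) * (X - C b) * (X - C d) := by
  rw [Matrix.charpoly, Matrix.det_fin_three]
  simp [Matrix.charmatrix_apply, Matrix.diagonal]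
  try ring

theorem stability_at_vbar (l1 l2 g : ℝ)
    (hl1 : 0 < l1) (hl2 : 1 < l2) (hg : 0 < g) :
    let J := jacobian (reducedMeanField l1 l2 g) ![0, 1 - 1 / l2, 0]
    ((∀ z : ℂ, (J.charpoly.map (algebraMap ℝ ℂ)).IsRoot z →
        ∃ r : ℝ, z = (r : ℂ) ∧ r < 0) ↔ l1 < l2) ∧
      (l2 < l1 → ∃ r : ℝ, 0 < r ∧ J.charpoly.IsRoot r) := by
  intro J
  have hl2pos : (0:ℝ) < l2 := lt_trans one_pos hl2
  have hJ : J = !![l1 / l2 - 1, 0, 0; -(l2 - 1), -(l2 - 1), -(l2 - 1); 1, 0, -g] :=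
    jac_eq l1 l2 g (ne_of_gt hl2pos)
  have hcp : J.charpoly = (X - C (l1 / l2 - 1)) * (X - C (-(l2 - 1))) * (X - C (-g)) := by
    rw [hJ, cp3]
  constructor
  · constructor
    · intro h
      obtain ⟨r, hzr, hrneg⟩ := h ((l1 / l2 - 1 : ℝ) : ℂ) (by
        simp [hcp, IsRoot, Polynomial.map_mul, Polynomial.map_sub])
      have : (l1 / l2 - 1 : ℝ) = r := by exact_mod_cast hzr
      have ha : l1 / l2 - 1 < 0 := this ▸ hrneg
      have := (div_lt_one hl2pos).mp (by linarith)
      linarith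
    · intro h z hz
      have hz' : (z - ((l1 / l2 - 1 : ℝ) : ℂ)) * (z - ((-(l2 - 1) : ℝ) : ℂ))
          * (z - ((-g : ℝ) : ℂ)) = 0 := by
        simpa [hcp, IsRoot, Polynomial.map_mul, Polynomial.map_sub] using hz
      have ha : l1 / l2 - 1 < 0 := by
        have := (div_lt_one hl2pos).mpr h
        linarith
      rcases mul_eq_zero.mp hz' with h' | h'
      · rcases mul_eq_zero.mp h' with h'' | h''
        · exact ⟨l1 / l2 - 1, sub_eq_zero.mp h'', ha⟩
        · exact ⟨-(l2 - 1), sub_eq_zero.mp h'', by linarith⟩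
      · exact ⟨-g, sub_eq_zero.mp h', by linarith⟩
  · intro h
    refine ⟨l1 / l2 - 1, ?_, ?_⟩
    · have := (one_lt_div hl2pos).mpr h
      linarith
    · simp [hcp, IsRoot]
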